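/- Let S be a virtual flat biquandle, A an abelian group with no 2-torsion, and φ: S × S → A a function satisfying φ(a,b) + φ(b∘a, a*b) = 0 for all a, b ∈ S. Then φ(a, a*a) = 0 and φ(a∘a, a) = 0 for all a ∈ S, and φ(b, a*b) + φ(a, b*a) = 0 and φ(b∘a, a) + φ(a∘b, b) = 0 for all a, b ∈ S. -/
import Mathlib


/-- A virtual flat biquandle: a set with two binary operations
`star a b = S_b(a)` and `circ a b = T_b(a)` satisfying
(i) `S_a S_b = S_b S_a`, `T_a T_b = T_b T_a`, `S_a T_b = T_b S_a`;
(ii) `S_a = S_{T_b(a)} = S_{S_b(a)}`, `T_a = T_{S_b(a)} = T_{T_b(a)}`;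
(iii) `T_a S_a = S_a T_a = id`. -/
structure VFB (S : Type*) where
  star : S → S → S
  circ : S → S → S
  star_star_comm : ∀ a b x, star (star x b) a = star (star x a) b
  circ_circ_comm : ∀ a b x, circ (circ x b) a = circ (circ x a) b
  star_circ_comm : ∀ a b x, star (circ x b) a = circ (star x a) b
  star_circ_invar : ∀ a b x, star x (circ a b) = star x a
  star_star_invar : ∀ a b x, star x (star a b) = star x a
  circ_star_invar : ∀ a b x, circ x (star a b) = circ x a
  circ_circ_invar : ∀ a b x, circ x (circ a b) = circ x a
  circ_star : ∀ a x, circ (star x a) a = x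
  star_circ : ∀ a x, star (circ x a) a = x

theorem stmt_15 {S : Type*} {A : Type*} [AddCommGroup A]
    (hA : ∀ x : A, x + x = 0 → x = 0)
    (V : VFB S) (φ : S → S → A)
    (hφ : ∀ a b : S, φ a b + φ (V.circ b a) (V.star a b) = 0) :
    (∀ a : S, φ a (V.star a a) = 0) ∧
    (∀ a : S, φ (V.circ a a) a = 0) ∧
    (∀ a b : S, φ b (V.star a b) + φ a (V.star b a) = 0) ∧
    (∀ a b : S, φ (V.circ b a) a + φ (V.circ a b) b = 0) := by
  refine ⟨?_, ?_, ?_, ?_⟩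
  · intro a
    have h := hφ a (V.star a a)
    rw [V.circ_star, V.star_star_invar] at h
    exact hA _ h
  · intro a
    have h := hφ (V.circ a a) a
    rw [V.circ_circ_invar, V.star_circ] at h
    exact hA _ h
  · intro a b
    have h := hφ a (V.star b a)
    rw [V.circ_star, V.star_star_invar] at h
    rw [add_comm]; exact h
  · intro a b
    have h := hφ (V.circ a b) b
    rw [V.circ_circ_invar, V.star_circ] at h
    rw [add_comm]; exact h
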